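/- Consider a consistent linear system Ax = b with A ∈ ℝ^{m×n} and a solution x*. Let {x^k}_{k≥0} be the randomized block Kaczmarz iterates x^{k+1} = x^k − (A_{J,:})† (A_{J,:} x^k − b_J), where each block J = {j_1, …, j_ℓ} consists of ℓ row indices of A sampled independently with probabilities ||A_{j,:}||₂² / ||A||_F², and x^0 − x* ∈ range(Aᵀ). If σmin⁺(A) denotes the smallest nonzero singular value of A, then E||x^k − x*||₂² ≤ (1 − σmin⁺(A)² / ||A||_F²)^{ℓk} · ||x^0 − x*||₂². -/

import Mathlib

open Matrix

/-- `Mp` is the Moore–Penrose pseudoinverse of `M` (the four Penrose conditions,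
which characterize it uniquely). -/
def IsMoorePenrose {k l : Type*} [Fintype k] [Fintype l]
    (M : Matrix k l ℝ) (Mp : Matrix l k ℝ) : Prop :=
  M * Mp * M = M ∧ Mp * M * Mp = Mp ∧ (M * Mp)ᵀ = M * Mp ∧ (Mp * M)ᵀ = Mp * M

/-- The smallest nonzero eigenvalue of a square real matrix
(with junk value `sInf ∅ = 0` if every eigenvalue is zero). -/
noncomputable def lamMinPos {n : ℕ} (M : Matrix (Fin n) (Fin n) ℝ) : ℝ :=
  sInf {μ : ℝ | μ ≠ 0 ∧ ∃ v : Fin n → ℝ, v ≠ 0 ∧ M *ᵥ v = μ • v}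

/-- The squared Frobenius norm of a matrix. -/
def frobSq {a b : ℕ} (M : Matrix (Fin a) (Fin b) ℝ) : ℝ := ∑ i, ∑ j, (M i j) ^ 2

/-- The trajectory of an iterative method: `traj step x0 k ω` is the `k`-th iterate
obtained from `x0` using the random draws `ω 0, …, ω (k-1)`. -/
def traj {V I : Type*} (step : I → V → V) (x0 : V) : (k : ℕ) → (Fin k → I) → V
  | 0, _ => x0
  | k + 1, ω => step (ω (Fin.last k)) (traj step x0 k (Fin.init ω))

lemma dot_self_nonneg {n : ℕ} (v : Fin n → ℝ) : 0 ≤ v ⬝ᵥ v :=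
  Finset.sum_nonneg fun i _ => mul_self_nonneg _

lemma dot_self_eq_zero' {n : ℕ} {v : Fin n → ℝ} (h : v ⬝ᵥ v = 0) : v = 0 := by
  ext i
  have := (Finset.sum_eq_zero_iff_of_nonneg (fun i _ => mul_self_nonneg (v i))).mp h i
    (Finset.mem_univ i)
  have := mul_self_eq_zero.mp this
  simpa using this

lemma dot_quad {m n : ℕ} (A : Matrix (Fin m) (Fin n) ℝ) (v : Fin n → ℝ) :
    (A *ᵥ v) ⬝ᵥ (A *ᵥ v) = v ⬝ᵥ ((Aᵀ * A) *ᵥ v) := by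
  rw [← mulVec_mulVec]
  conv_rhs => rw [dotProduct_mulVec, vecMul_transpose]

lemma herm_tA_A {m n : ℕ} (A : Matrix (Fin m) (Fin n) ℝ) : (Aᵀ * A).IsHermitian := by
  have : Aᴴ = Aᵀ := by ext i j; simp [conjTranspose_apply]
  rw [← this]; exact isHermitian_conjTranspose_mul_self A

lemma lamMinPos_nonneg_set {m n : ℕ} (A : Matrix (Fin m) (Fin n) ℝ) :
    ∀ μ ∈ {μ : ℝ | μ ≠ 0 ∧ ∃ v : Fin n → ℝ, v ≠ 0 ∧ (Aᵀ * A) *ᵥ v = μ • v}, 0 ≤ μ := by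
  rintro μ ⟨hμ, v, hv, hev⟩
  by_contra hneg
  push_neg at hneg
  have h1 : (A *ᵥ v) ⬝ᵥ (A *ᵥ v) = μ * (v ⬝ᵥ v) := by
    rw [dot_quad, hev, dotProduct_smul]; rfl
  have h2 : 0 < v ⬝ᵥ v := by
    rcases lt_or_eq_of_le (dot_self_nonneg v) with h | h
    · exact h
    · exact absurd (dot_self_eq_zero' h.symm) hv
  nlinarith [dot_self_nonneg (A *ᵥ v)]

lemma quad_lower {m n : ℕ} (A : Matrix (Fin m) (Fin n) ℝ) (u : Fin m → ℝ) :
    lamMinPos (Aᵀ * A) * ((Aᵀ *ᵥ u) ⬝ᵥ (Aᵀ *ᵥ u)) ≤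
      (A *ᵥ (Aᵀ *ᵥ u)) ⬝ᵥ (A *ᵥ (Aᵀ *ᵥ u)) := by
  set S := Aᵀ * A with hSdef
  have hS : S.IsHermitian := herm_tA_A A
  set e : Fin n → ℝ := Aᵀ *ᵥ u with he
  set d := hS.eigenvalues with hd
  set B := hS.eigenvectorBasis with hB
  set w : Fin n → (Fin n → ℝ) := fun i => (WithLp.equiv 2 (Fin n → ℝ)) (B i) with hw
  have h1 : ∀ i, S *ᵥ w i = d i • w i := fun i => hS.mulVec_eigenvectorBasis i
  -- inner products as dot products
  have hinner : ∀ x y : EuclideanSpace ℝ (Fin n),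
      (inner ℝ x y : ℝ) = (WithLp.equiv 2 (Fin n → ℝ)) x ⬝ᵥ (WithLp.equiv 2 (Fin n → ℝ)) y := by
    intro x y
    simp [PiLp.inner_apply, dotProduct, RCLike.inner_apply, mul_comm]
  set e' : EuclideanSpace ℝ (Fin n) := (WithLp.equiv 2 (Fin n → ℝ)).symm e with he'
  have hee' : (WithLp.equiv 2 (Fin n → ℝ)) e' = e := rfl
  set c : Fin n → ℝ := fun i => w i ⬝ᵥ e with hc
  have hsym : Sᵀ = S := by
    rw [hSdef, transpose_mul, transpose_transpose]
  have hBc : ∀ i, (inner ℝ (B i) e' : ℝ) = c i := by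
    intro i; rw [hinner]; rfl
  have hcB : ∀ i, (inner ℝ e' (B i) : ℝ) = c i := by
    intro i; rw [hinner]
    exact dotProduct_comm _ _
  have hnorm : e ⬝ᵥ e = ∑ i, c i ^ 2 := by
    have := B.sum_inner_mul_inner e' e'
    rw [hinner] at this
    rw [hee'] at this
    rw [← this]
    apply Finset.sum_congr rfl
    intro i _
    rw [hcB i, hBc i, sq]
  have hSe : ∀ i, w i ⬝ᵥ (S *ᵥ e) = d i * c i := by
    intro i
    rw [dotProduct_mulVec, ← hsym, vecMul_transpose, h1 i, smul_dotProduct]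
    rfl
  have hquad : e ⬝ᵥ (S *ᵥ e) = ∑ i, d i * c i ^ 2 := by
    set Se' : EuclideanSpace ℝ (Fin n) := (WithLp.equiv 2 (Fin n → ℝ)).symm (S *ᵥ e) with hSe'
    have := B.sum_inner_mul_inner e' Se'
    rw [hinner] at this
    rw [hee'] at this
    have h2 : (WithLp.equiv 2 (Fin n → ℝ)) Se' = S *ᵥ e := rfl
    rw [h2] at this
    rw [← this]
    apply Finset.sum_congr rfl
    intro i _
    have : (inner ℝ (B i) Se' : ℝ) = d i * c i := by
      rw [hinner]; exact hSe i
    rw [hcB i, this]; ring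
  have hz : ∀ i, d i = 0 → c i = 0 := by
    intro i hdi
    have hAw : A *ᵥ w i = 0 := by
      apply dot_self_eq_zero'
      rw [dot_quad, ← hSdef, h1 i, hdi, zero_smul, dotProduct_zero]
    have : c i = (A *ᵥ w i) ⬝ᵥ u := by
      rw [hc]; simp only []
      rw [he, dotProduct_mulVec, vecMul_transpose]
    rw [this, hAw, zero_dotProduct]
  have hlow : ∀ i, d i ≠ 0 → lamMinPos S ≤ d i := by
    intro i hdi
    apply csInf_le ⟨0, fun μ hμ => lamMinPos_nonneg_set A μ hμ⟩
    refine ⟨hdi, w i, ?_, h1 i⟩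
    intro hwz
    have : B i = 0 := by
      apply (WithLp.equiv 2 (Fin n → ℝ)).injective
      simpa [hw] using hwz
    have hn := B.orthonormal.1 i
    rw [this] at hn; simp at hn
  calc lamMinPos S * (e ⬝ᵥ e) = ∑ i, lamMinPos S * c i ^ 2 := by
        rw [hnorm, Finset.mul_sum]
      _ ≤ ∑ i, d i * c i ^ 2 := by
        apply Finset.sum_le_sum
        intro i _
        rcases eq_or_ne (d i) 0 with h | h
        · rw [h, hz i h]; simp
        · exact mul_le_mul_of_nonneg_right (hlow i h) (sq_nonneg _)
      _ = e ⬝ᵥ (S *ᵥ e) := hquad.symm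
      _ = (A *ᵥ e) ⬝ᵥ (A *ᵥ e) := (dot_quad A e).symm






noncomputable def rproj {m n : ℕ} (A : Matrix (Fin m) (Fin n) ℝ) (j : Fin m)
    (e : Fin n → ℝ) : Fin n → ℝ :=
  e - ((A j ⬝ᵥ e) / (A j ⬝ᵥ A j)) • A j

lemma row_eq_tmulVec {m n : ℕ} (A : Matrix (Fin m) (Fin n) ℝ) (j : Fin m) :
    A j = Aᵀ *ᵥ Pi.single j 1 := by
  ext c
  simp [mulVec, dotProduct, Pi.single_apply]

lemma rproj_range {m n : ℕ} (A : Matrix (Fin m) (Fin n) ℝ) (j : Fin m) (u : Fin m → ℝ) :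
    ∃ u', rproj A j (Aᵀ *ᵥ u) = Aᵀ *ᵥ u' := by
  refine ⟨u - ((A j ⬝ᵥ (Aᵀ *ᵥ u)) / (A j ⬝ᵥ A j)) • (Pi.single j 1 : Fin m → ℝ), ?_⟩
  rw [rproj, mulVec_sub, mulVec_smul, ← row_eq_tmulVec]

lemma rproj_sq {m n : ℕ} (A : Matrix (Fin m) (Fin n) ℝ) (j : Fin m) (e : Fin n → ℝ)
    (hq : A j ⬝ᵥ A j ≠ 0) :
    rproj A j e ⬝ᵥ rproj A j e = e ⬝ᵥ e - (A j ⬝ᵥ e) ^ 2 / (A j ⬝ᵥ A j) := by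
  rw [rproj]
  rw [sub_dotProduct, dotProduct_sub, dotProduct_sub, smul_dotProduct, smul_dotProduct,
    dotProduct_smul, dotProduct_comm (A j) e]
  simp only [dotProduct_smul, smul_eq_mul]
  field_simp
  ring

lemma frobSq_nonneg {a b : ℕ} (M : Matrix (Fin a) (Fin b) ℝ) : 0 ≤ frobSq M :=
  Finset.sum_nonneg fun _ _ => Finset.sum_nonneg fun _ _ => sq_nonneg _

lemma row_sq_eq_dot {m n : ℕ} (A : Matrix (Fin m) (Fin n) ℝ) (j : Fin m) :
    ∑ c, (A j c) ^ 2 = A j ⬝ᵥ A j := by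
  simp [dotProduct, sq]

lemma sum_rows_eq_frob {m n : ℕ} (A : Matrix (Fin m) (Fin n) ℝ) :
    ∑ j, A j ⬝ᵥ A j = frobSq A := by
  rw [frobSq]
  exact Finset.sum_congr rfl fun j _ => (row_sq_eq_dot A j).symm

lemma mulVec_sq_sum {m n : ℕ} (A : Matrix (Fin m) (Fin n) ℝ) (e : Fin n → ℝ) :
    (A *ᵥ e) ⬝ᵥ (A *ᵥ e) = ∑ j, (A j ⬝ᵥ e) ^ 2 := by
  simp [dotProduct, mulVec, sq]


lemma row_exp {m n : ℕ} (A : Matrix (Fin m) (Fin n) ℝ) (hF : 0 < frobSq A)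
    (p : Fin m → ℝ) (hp : ∀ j, p j = (∑ c, (A j c) ^ 2) / frobSq A) (u : Fin m → ℝ) :
    ∑ j, p j * (rproj A j (Aᵀ *ᵥ u) ⬝ᵥ rproj A j (Aᵀ *ᵥ u)) ≤
      (1 - lamMinPos (Aᵀ * A) / frobSq A) * ((Aᵀ *ᵥ u) ⬝ᵥ (Aᵀ *ᵥ u)) := by
  set e := Aᵀ *ᵥ u with he
  set F := frobSq A with hFdef
  have hFne : F ≠ 0 := ne_of_gt hF
  have hterm : ∀ j, p j * (rproj A j e ⬝ᵥ rproj A j e) =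
      p j * (e ⬝ᵥ e) - (A j ⬝ᵥ e) ^ 2 / F := by
    intro j
    rcases eq_or_ne (A j ⬝ᵥ A j) 0 with hq | hq
    · have hAj : A j = 0 := dot_self_eq_zero' hq
      have hpj : p j = 0 := by rw [hp j, row_sq_eq_dot, hq, zero_div]
      rw [hpj, hAj]
      simp
    · rw [rproj_sq A j e hq, hp j, row_sq_eq_dot]
      field_simp
  calc ∑ j, p j * (rproj A j e ⬝ᵥ rproj A j e)
      = (∑ j, p j) * (e ⬝ᵥ e) - ((A *ᵥ e) ⬝ᵥ (A *ᵥ e)) / F := by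
        rw [Finset.sum_congr rfl fun j _ => hterm j, Finset.sum_sub_distrib,
          ← Finset.sum_mul, mulVec_sq_sum A e, Finset.sum_div]
    _ = e ⬝ᵥ e - ((A *ᵥ e) ⬝ᵥ (A *ᵥ e)) / F := by
        have : ∑ j, p j = 1 := by
          rw [Finset.sum_congr rfl fun j (_ : j ∈ Finset.univ) => hp j, ← Finset.sum_div]
          rw [Finset.sum_congr rfl fun j (_ : j ∈ Finset.univ) => row_sq_eq_dot A j,
            sum_rows_eq_frob, ← hFdef, div_self hFne]
        rw [this, one_mul]
    _ ≤ e ⬝ᵥ e - lamMinPos (Aᵀ * A) * (e ⬝ᵥ e) / F := by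
        exact sub_le_sub_left ((div_le_div_iff_of_pos_right hF).mpr (quad_lower A u)) _
    _ = (1 - lamMinPos (Aᵀ * A) / F) * (e ⬝ᵥ e) := by ring



lemma lam_le_F {m n : ℕ} (A : Matrix (Fin m) (Fin n) ℝ) (hF : 0 < frobSq A) :
    lamMinPos (Aᵀ * A) ≤ frobSq A := by
  rw [lamMinPos]
  set s := {μ : ℝ | μ ≠ 0 ∧ ∃ v : Fin n → ℝ, v ≠ 0 ∧ (Aᵀ * A) *ᵥ v = μ • v} with hs
  rcases Set.eq_empty_or_nonempty s with h | h
  · rw [h, Real.sInf_empty]; exact le_of_lt hF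
  · obtain ⟨μ, hμ⟩ := h
    refine le_trans (csInf_le ⟨0, fun ν hν => lamMinPos_nonneg_set A ν hν⟩ hμ) ?_
    obtain ⟨hμ0, v, hv, hev⟩ := hμ
    have hvv : 0 < v ⬝ᵥ v := by
      rcases lt_or_eq_of_le (dot_self_nonneg v) with h' | h'
      · exact h'
      · exact absurd (dot_self_eq_zero' h'.symm) hv
    have h1 : μ * (v ⬝ᵥ v) = (A *ᵥ v) ⬝ᵥ (A *ᵥ v) := by
      rw [dot_quad A v, hev, dotProduct_smul]; rfl
    have h2 : (A *ᵥ v) ⬝ᵥ (A *ᵥ v) ≤ frobSq A * (v ⬝ᵥ v) := by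
      rw [mulVec_sq_sum, ← sum_rows_eq_frob, Finset.sum_mul]
      apply Finset.sum_le_sum
      intro j _
      have hcs := Finset.sum_mul_sq_le_sq_mul_sq Finset.univ (A j) v
      calc (A j ⬝ᵥ v) ^ 2 = (∑ c, A j c * v c) ^ 2 := rfl
        _ ≤ (∑ c, (A j c) ^ 2) * ∑ c, (v c) ^ 2 := hcs
        _ = (A j ⬝ᵥ A j) * (v ⬝ᵥ v) := by
            rw [row_sq_eq_dot]
            congr 1
            simp [dotProduct, sq]
    have := h1 ▸ h2
    exact le_of_mul_le_mul_right this hvv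





noncomputable def chain {m n : ℕ} (A : Matrix (Fin m) (Fin n) ℝ) :
    (l : ℕ) → (Fin l → Fin m) → (Fin n → ℝ) → (Fin n → ℝ)
  | 0, _, e => e
  | l + 1, J, e => rproj A (J (Fin.last l)) (chain A l (Fin.init J) e)

/-- The chain differs from `e` by something in the row space of the block. -/
lemma chain_sub {m n : ℕ} (A : Matrix (Fin m) (Fin n) ℝ) :
    ∀ (l : ℕ) (J : Fin l → Fin m) (e : Fin n → ℝ),
      ∃ w : Fin l → ℝ, chain A l J e = e - (A.submatrix J id)ᵀ *ᵥ w := by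
  intro l
  induction l with
  | zero =>
      intro J e
      refine ⟨0, ?_⟩
      rw [mulVec_zero, sub_zero]
      rfl
  | succ l ih =>
      intro J e
      obtain ⟨w', hw'⟩ := ih (Fin.init J) e
      set c := (A (J (Fin.last l)) ⬝ᵥ chain A l (Fin.init J) e) /
        (A (J (Fin.last l)) ⬝ᵥ A (J (Fin.last l))) with hc
      refine ⟨Fin.snoc w' c, ?_⟩
      have hch : chain A (l + 1) J e =
          chain A l (Fin.init J) e - c • A (J (Fin.last l)) := rfl
      rw [hch, hw']
      have : (A.submatrix J id)ᵀ *ᵥ Fin.snoc w' c =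
          (A.submatrix (Fin.init J) id)ᵀ *ᵥ w' + c • A (J (Fin.last l)) := by
        ext i
        simp only [mulVec, dotProduct, transpose_apply, submatrix_apply, id_eq,
          Pi.add_apply, Pi.smul_apply, smul_eq_mul]
        rw [Fin.sum_univ_castSucc]
        simp only [Fin.snoc_castSucc, Fin.snoc_last]
        have hinit : ∀ t : Fin l, J t.castSucc = Fin.init J t := fun t => rfl
        simp only [hinit]
        ring
      rw [this]
      abel



lemma chain_range {m n : ℕ} (A : Matrix (Fin m) (Fin n) ℝ) :
    ∀ (l : ℕ) (J : Fin l → Fin m) (u : Fin m → ℝ),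
      ∃ u', chain A l J (Aᵀ *ᵥ u) = Aᵀ *ᵥ u' := by
  intro l
  induction l with
  | zero => intro J u; exact ⟨u, rfl⟩
  | succ l ih =>
      intro J u
      obtain ⟨u', hu'⟩ := ih (Fin.init J) u
      obtain ⟨u'', hu''⟩ := rproj_range A (J (Fin.last l)) u'
      exact ⟨u'', by rw [show chain A (l+1) J (Aᵀ *ᵥ u) =
        rproj A (J (Fin.last l)) (chain A l (Fin.init J) (Aᵀ *ᵥ u)) from rfl, hu', hu'']⟩

/-- `(A_J)ᵀ *ᵥ w` lies in the range of `Aᵀ`. -/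
lemma submatrixT_range {m n l : ℕ} (A : Matrix (Fin m) (Fin n) ℝ)
    (J : Fin l → Fin m) (w : Fin l → ℝ) :
    ∃ g : Fin m → ℝ, (A.submatrix J id)ᵀ *ᵥ w = Aᵀ *ᵥ g := by
  classical
  refine ⟨fun j => ∑ t, if J t = j then w t else 0, ?_⟩
  ext c
  simp only [mulVec, dotProduct, transpose_apply, submatrix_apply, id_eq]
  calc ∑ t, A (J t) c * w t
      = ∑ t, ∑ j, A j c * (if J t = j then w t else 0) := by
        apply Finset.sum_congr rfl
        intro t _
        simp [mul_ite, mul_zero, Finset.sum_ite_eq]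
    _ = ∑ j, ∑ t, A j c * (if J t = j then w t else 0) := Finset.sum_comm
    _ = ∑ j, A j c * ∑ t, (if J t = j then w t else 0) := by
        simp [Finset.mul_sum]

section Penrose
variable {m n l : ℕ} (A : Matrix (Fin m) (Fin n) ℝ) (J : Fin l → Fin m)
  (Mp : Matrix (Fin n) (Fin l) ℝ)

lemma penrose_QMt (h : IsMoorePenrose (A.submatrix J id) Mp) :
    Mp * A.submatrix J id * (A.submatrix J id)ᵀ = (A.submatrix J id)ᵀ := by
  obtain ⟨h1, h2, h3, h4⟩ := h
  calc Mp * A.submatrix J id * (A.submatrix J id)ᵀ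
      = (Mp * A.submatrix J id)ᵀ * (A.submatrix J id)ᵀ := by rw [h4]
    _ = (A.submatrix J id * (Mp * A.submatrix J id))ᵀ := by rw [← transpose_mul]
    _ = (A.submatrix J id * Mp * A.submatrix J id)ᵀ := by rw [Matrix.mul_assoc]
    _ = (A.submatrix J id)ᵀ := by rw [h1]

lemma penrose_Qidem (h : IsMoorePenrose (A.submatrix J id) Mp) :
    (Mp * A.submatrix J id) * (Mp * A.submatrix J id) = Mp * A.submatrix J id := by
  obtain ⟨h1, h2, h3, h4⟩ := h
  calc (Mp * A.submatrix J id) * (Mp * A.submatrix J id)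
      = (Mp * A.submatrix J id * Mp) * A.submatrix J id := by
        rw [Matrix.mul_assoc, Matrix.mul_assoc, Matrix.mul_assoc]
    _ = Mp * A.submatrix J id := by rw [h2]

lemma penrose_Mp_factor (h : IsMoorePenrose (A.submatrix J id) Mp) :
    Mp = (A.submatrix J id)ᵀ * (Mpᵀ * Mp) := by
  obtain ⟨h1, h2, h3, h4⟩ := h
  calc Mp = Mp * A.submatrix J id * Mp := h2.symm
    _ = (Mp * A.submatrix J id)ᵀ * Mp := by rw [h4]
    _ = (A.submatrix J id)ᵀ * Mpᵀ * Mp := by rw [transpose_mul]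
    _ = (A.submatrix J id)ᵀ * (Mpᵀ * Mp) := by rw [Matrix.mul_assoc]

/-- The update error in terms of the projection `Q = Mp * M`. -/
lemma step_err (b : Fin m → ℝ) (xstar : Fin n → ℝ) (hxstar : A *ᵥ xstar = b) (x : Fin n → ℝ) :
    x - Mp *ᵥ (A.submatrix J id *ᵥ x - fun t => b (J t)) - xstar =
      (x - xstar) - (Mp * A.submatrix J id) *ᵥ (x - xstar) := by
  have hb : (fun t => b (J t)) = A.submatrix J id *ᵥ xstar := by
    ext t
    rw [← hxstar]
    simp [mulVec, dotProduct]
  rw [hb, ← mulVec_sub, ← mulVec_mulVec]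
  abel

/-- Orthogonal projection shrinks: `‖v - Q v‖² ≤ ‖v‖²`. -/
lemma proj_shrink (h : IsMoorePenrose (A.submatrix J id) Mp) (v : Fin n → ℝ) :
    (v - (Mp * A.submatrix J id) *ᵥ v) ⬝ᵥ (v - (Mp * A.submatrix J id) *ᵥ v) ≤ v ⬝ᵥ v := by
  set Q := Mp * A.submatrix J id with hQ
  have hQsym : Qᵀ = Q := h.2.2.2
  have hQidem : Q * Q = Q := penrose_Qidem A J Mp h
  set y := Q *ᵥ v with hy
  have hQy : Q *ᵥ y = y := by rw [hy, mulVec_mulVec, hQidem]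
  have hyy : y ⬝ᵥ y = y ⬝ᵥ v := by
    conv_lhs => rw [hy]
    rw [show y ⬝ᵥ Q *ᵥ v = (y ᵥ* Q) ⬝ᵥ v from dotProduct_mulVec y Q v]
    rw [show y ᵥ* Q = Q *ᵥ y by conv_lhs => rw [← hQsym, vecMul_transpose]
      , hQy]
  have hvy : v ⬝ᵥ y = y ⬝ᵥ v := dotProduct_comm v y
  have expand : (v - y) ⬝ᵥ (v - y) = v ⬝ᵥ v - y ⬝ᵥ y := by
    rw [sub_dotProduct, dotProduct_sub, dotProduct_sub, hvy, hyy]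
    ring
  rw [expand]
  have := dot_self_nonneg y
  linarith

end Penrose

lemma step_le_chain {m n l : ℕ} (A : Matrix (Fin m) (Fin n) ℝ) (J : Fin l → Fin m)
    (Mp : Matrix (Fin n) (Fin l) ℝ) (h : IsMoorePenrose (A.submatrix J id) Mp)
    (e : Fin n → ℝ) :
    (e - (Mp * A.submatrix J id) *ᵥ e) ⬝ᵥ (e - (Mp * A.submatrix J id) *ᵥ e) ≤
      chain A l J e ⬝ᵥ chain A l J e := by
  set Q := Mp * A.submatrix J id with hQ
  set c := chain A l J e with hc
  obtain ⟨w, hw⟩ := chain_sub A l J e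
  have hQw : Q *ᵥ ((A.submatrix J id)ᵀ *ᵥ w) = (A.submatrix J id)ᵀ *ᵥ w := by
    rw [mulVec_mulVec, hQ, penrose_QMt A J Mp h]
  have key : e - Q *ᵥ e = c - Q *ᵥ c := by
    rw [hc, hw, mulVec_sub, hQw]
    abel
  rw [key]
  exact proj_shrink A J Mp h c

lemma step_range {m n l : ℕ} (A : Matrix (Fin m) (Fin n) ℝ) (J : Fin l → Fin m)
    (Mp : Matrix (Fin n) (Fin l) ℝ) (h : IsMoorePenrose (A.submatrix J id) Mp)
    (u : Fin m → ℝ) :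
    ∃ u', (Aᵀ *ᵥ u) - (Mp * A.submatrix J id) *ᵥ (Aᵀ *ᵥ u) = Aᵀ *ᵥ u' := by
  set e := Aᵀ *ᵥ u with he
  have h1 : ∀ v : Fin n → ℝ, (Mp * A.submatrix J id) *ᵥ v =
      (A.submatrix J id)ᵀ *ᵥ ((Mpᵀ * Mp) *ᵥ (A.submatrix J id *ᵥ v)) := by
    intro v
    rw [mulVec_mulVec, mulVec_mulVec]
    congr 1
    rw [← penrose_Mp_factor A J Mp h]
  obtain ⟨g, hg⟩ := submatrixT_range A J ((Mpᵀ * Mp) *ᵥ (A.submatrix J id *ᵥ e))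
  refine ⟨u - g, ?_⟩
  rw [mulVec_sub, h1 e, hg]


lemma sum_succ_fn {I : Type*} [Fintype I] (k : ℕ) (f : (Fin (k + 1) → I) → ℝ) :
    ∑ ω : Fin (k + 1) → I, f ω = ∑ ω' : Fin k → I, ∑ j : I, f (Fin.snoc ω' j) := by
  have hbij : Function.Bijective (fun x : (Fin k → I) × I => (Fin.snoc x.1 x.2 : Fin (k+1) → I)) := by
    constructor
    · intro a b h
      have h1 : a.1 = b.1 := by
        have := congrArg Fin.init h
        rwa [Fin.init_snoc, Fin.init_snoc] at this
      have h2 : a.2 = b.2 := by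
        have := congrArg (fun g => g (Fin.last k)) h
        simpa [Fin.snoc_last] using this
      exact Prod.ext h1 h2
    · intro ω
      exact ⟨(Fin.init ω, ω (Fin.last k)), Fin.snoc_init_self ω⟩
  calc ∑ ω, f ω = ∑ x : (Fin k → I) × I, f (Fin.snoc x.1 x.2) :=
        (Fintype.sum_bijective _ hbij _ _ (fun x => rfl)).symm
    _ = ∑ ω' : Fin k → I, ∑ j : I, f (Fin.snoc ω' j) := Fintype.sum_prod_type _

lemma p_nonneg {m n : ℕ} (A : Matrix (Fin m) (Fin n) ℝ) (p : Fin m → ℝ)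
    (hp : ∀ j, p j = (∑ c, (A j c) ^ 2) / frobSq A) (j : Fin m) : 0 ≤ p j := by
  rw [hp j]
  exact div_nonneg (Finset.sum_nonneg fun _ _ => sq_nonneg _) (frobSq_nonneg A)

lemma rho_nonneg {m n : ℕ} (A : Matrix (Fin m) (Fin n) ℝ) (hF : 0 < frobSq A) :
    0 ≤ 1 - lamMinPos (Aᵀ * A) / frobSq A := by
  have := lam_le_F A hF
  have h1 : lamMinPos (Aᵀ * A) / frobSq A ≤ 1 := (div_le_one hF).mpr this
  linarith

lemma chain_exp {m n : ℕ} (A : Matrix (Fin m) (Fin n) ℝ) (hF : 0 < frobSq A)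
    (p : Fin m → ℝ) (hp : ∀ j, p j = (∑ c, (A j c) ^ 2) / frobSq A) :
    ∀ (l : ℕ) (u : Fin m → ℝ),
      ∑ J : Fin l → Fin m,
          (∏ t, p (J t)) * (chain A l J (Aᵀ *ᵥ u) ⬝ᵥ chain A l J (Aᵀ *ᵥ u)) ≤
        (1 - lamMinPos (Aᵀ * A) / frobSq A) ^ l * ((Aᵀ *ᵥ u) ⬝ᵥ (Aᵀ *ᵥ u)) := by
  intro l
  induction l with
  | zero =>
      intro u
      haveI : Unique (Fin 0 → Fin m) := ⟨⟨fun i => i.elim0⟩, fun f => funext fun i => i.elim0⟩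
      rw [Fintype.sum_unique]
      simp [chain]
  | succ l ih =>
      intro u
      set e := Aᵀ *ᵥ u with he
      set ρ := 1 - lamMinPos (Aᵀ * A) / frobSq A with hρ
      have hρ0 : 0 ≤ ρ := rho_nonneg A hF
      rw [sum_succ_fn]
      have hterm : ∀ (J' : Fin l → Fin m) (j : Fin m),
          (∏ t, p ((Fin.snoc J' j : Fin (l+1) → Fin m) t)) *
              (chain A (l+1) (Fin.snoc J' j) e ⬝ᵥ chain A (l+1) (Fin.snoc J' j) e) =
            (∏ t, p (J' t)) *
              (p j * (rproj A j (chain A l J' e) ⬝ᵥ rproj A j (chain A l J' e))) := by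
        intro J' j
        have h1 : (∏ t, p ((Fin.snoc J' j : Fin (l+1) → Fin m) t)) = (∏ t, p (J' t)) * p j := by
          rw [Fin.prod_univ_castSucc]
          simp [Fin.snoc_castSucc, Fin.snoc_last]
        have h2 : chain A (l+1) (Fin.snoc J' j) e = rproj A j (chain A l J' e) := by
          have h2' : chain A (l+1) (Fin.snoc J' j) e =
              rproj A ((Fin.snoc J' j : Fin (l+1) → Fin m) (Fin.last l))
                (chain A l (Fin.init (Fin.snoc J' j : Fin (l+1) → Fin m)) e) := rfl
          rw [h2', Fin.snoc_last, Fin.init_snoc]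
        rw [h1, h2]
        ring
      calc ∑ J' : Fin l → Fin m, ∑ j,
              (∏ t, p ((Fin.snoc J' j : Fin (l+1) → Fin m) t)) *
                (chain A (l+1) (Fin.snoc J' j) e ⬝ᵥ chain A (l+1) (Fin.snoc J' j) e)
          = ∑ J' : Fin l → Fin m, (∏ t, p (J' t)) *
              ∑ j, p j * (rproj A j (chain A l J' e) ⬝ᵥ rproj A j (chain A l J' e)) := by
            apply Finset.sum_congr rfl
            intro J' _
            rw [Finset.mul_sum]
            exact Finset.sum_congr rfl fun j _ => hterm J' j
        _ ≤ ∑ J' : Fin l → Fin m, (∏ t, p (J' t)) *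
              (ρ * (chain A l J' e ⬝ᵥ chain A l J' e)) := by
            apply Finset.sum_le_sum
            intro J' _
            apply mul_le_mul_of_nonneg_left ?_
              (Finset.prod_nonneg fun t _ => p_nonneg A p hp _)
            obtain ⟨u', hu'⟩ := chain_range A l J' u
            rw [he, hρ, hu']
            exact row_exp A hF p hp u'
        _ = ρ * ∑ J' : Fin l → Fin m,
              (∏ t, p (J' t)) * (chain A l J' e ⬝ᵥ chain A l J' e) := by
            rw [Finset.mul_sum]
            exact Finset.sum_congr rfl fun J' _ => by ring
        _ ≤ ρ * (ρ ^ l * (e ⬝ᵥ e)) := mul_le_mul_of_nonneg_left (ih u) hρ0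
        _ = ρ ^ (l + 1) * (e ⬝ᵥ e) := by ring

/-- randomized block Kaczmarz rate. With blocks of `ℓ` rows sampled
i.i.d. with probabilities `‖A_{j,:}‖₂²/‖A‖_F²` and the update
`x^{k+1} = x^k − (A_{J,:})†(A_{J,:}x^k − b_J)`, one has
`E‖x^k − x*‖₂² ≤ (1 − σmin⁺(A)²/‖A‖_F²)^{ℓk} ‖x^0 − x*‖₂²`, where
`σmin⁺(A)² = λmin⁺(AᵀA)`. -/
theorem stmt_10 {m n l : ℕ}
    (A : Matrix (Fin m) (Fin n) ℝ) (b : Fin m → ℝ)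
    (hconsistent : ∃ x, A *ᵥ x = b)
    (xstar : Fin n → ℝ) (hxstar : A *ᵥ xstar = b)
    (x0 : Fin n → ℝ) (hx0 : ∃ u : Fin m → ℝ, x0 - xstar = Aᵀ *ᵥ u)
    -- `pJ J = (A_{J,:})†` for a block `J` of `ℓ` row indices
    (pJ : (Fin l → Fin m) → Matrix (Fin n) (Fin l) ℝ)
    (hpJ : ∀ J : Fin l → Fin m, IsMoorePenrose (A.submatrix J id) (pJ J))
    -- the block Kaczmarz update
    (step : (Fin l → Fin m) → (Fin n → ℝ) → (Fin n → ℝ))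
    (hstep : ∀ (J : Fin l → Fin m) (x : Fin n → ℝ),
      step J x = x - pJ J *ᵥ (A.submatrix J id *ᵥ x - fun t => b (J t)))
    -- the row sampling probabilities
    (p : Fin m → ℝ) (hp : ∀ j, p j = (∑ c, (A j c) ^ 2) / frobSq A) :
    ∀ k : ℕ,
      ∑ ω : Fin k → (Fin l → Fin m), (∏ i, ∏ t, p (ω i t)) *
          ((traj step x0 k ω - xstar) ⬝ᵥ (traj step x0 k ω - xstar)) ≤
        (1 - lamMinPos (Aᵀ * A) / frobSq A) ^ (l * k) *
          ((x0 - xstar) ⬝ᵥ (x0 - xstar)) := by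
  have e0nn : 0 ≤ (x0 - xstar) ⬝ᵥ (x0 - xstar) := dot_self_nonneg _
  by_cases hF0 : frobSq A = 0
  · -- degenerate case : A = 0
    have hpz : ∀ j, p j = 0 := fun j => by rw [hp j, hF0, div_zero]
    have hρ1 : (1 - lamMinPos (Aᵀ * A) / frobSq A) = 1 := by rw [hF0, div_zero, sub_zero]
    intro k
    rw [hρ1, one_pow, one_mul]
    rcases Nat.eq_zero_or_pos k with hk | hk
    · subst hk
      haveI : Unique (Fin 0 → (Fin l → Fin m)) :=
        ⟨⟨fun i => i.elim0⟩, fun f => funext fun i => i.elim0⟩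
      have h1 : (∏ i : Fin 0, ∏ t, p ((default : Fin 0 → Fin l → Fin m) i t)) = 1 := by simp
      rw [Fintype.sum_unique, h1, one_mul]
      exact le_refl _
    · obtain ⟨k', rfl⟩ := Nat.exists_eq_succ_of_ne_zero (Nat.pos_iff_ne_zero.mp hk)
      rcases Nat.eq_zero_or_pos l with hl | hl
      · subst hl
        -- blocks of size zero: the step is the identity
        have hstepid : ∀ (J : Fin 0 → Fin m) x, step J x = x := by
          intro J x
          rw [hstep J x]
          have hz : pJ J *ᵥ (A.submatrix J id *ᵥ x - fun t => b (J t)) = 0 := by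
            ext i
            simp [mulVec, dotProduct]
          rw [hz, sub_zero]
        have htraj : ∀ k (ω : Fin k → (Fin 0 → Fin m)), traj step x0 k ω = x0 := by
          intro k
          induction k with
          | zero => intro ω; rfl
          | succ k ih =>
              intro ω
              show step (ω (Fin.last k)) (traj step x0 k (Fin.init ω)) = x0
              rw [ih (Fin.init ω), hstepid]
        haveI : Unique (Fin 0 → Fin m) :=
          ⟨⟨fun i => i.elim0⟩, fun f => funext fun i => i.elim0⟩
        rw [Fintype.sum_unique]
        have h1 : (∏ i : Fin (k'+1), ∏ t : Fin 0,
            p ((default : Fin (k'+1) → Fin 0 → Fin m) i t)) = 1 := by simp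
        rw [h1, one_mul, htraj]
      · obtain ⟨l', rfl⟩ := Nat.exists_eq_succ_of_ne_zero (Nat.pos_iff_ne_zero.mp hl)
        have hzero : ∀ ω : Fin (k'+1) → (Fin (l'+1) → Fin m),
            (∏ i, ∏ t, p (ω i t)) *
              ((traj step x0 (k'+1) ω - xstar) ⬝ᵥ (traj step x0 (k'+1) ω - xstar)) = 0 := by
          intro ω
          have h0 : (∏ t, p (ω 0 t)) = 0 :=
            Finset.prod_eq_zero (Finset.mem_univ 0) (hpz _)
          have h1 : (∏ i, ∏ t, p (ω i t)) = 0 :=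
            Finset.prod_eq_zero (Finset.mem_univ 0) h0
          rw [h1, zero_mul]
        rw [Finset.sum_eq_zero fun ω _ => hzero ω]
        exact e0nn
  · -- main case : positive Frobenius norm
    have hF : 0 < frobSq A := lt_of_le_of_ne (frobSq_nonneg A) (Ne.symm hF0)
    set ρ := 1 - lamMinPos (Aᵀ * A) / frobSq A with hρ
    have hρ0 : 0 ≤ ρ := rho_nonneg A hF
    -- the update error as a projection
    have herr : ∀ (J : Fin l → Fin m) x, step J x - xstar =
        (x - xstar) - (pJ J * A.submatrix J id) *ᵥ (x - xstar) := by
      intro J x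
      rw [hstep J x]
      exact step_err A J (pJ J) b xstar hxstar x
    -- one-step expected contraction
    have hstepexp : ∀ x : Fin n → ℝ, (∃ u, x - xstar = Aᵀ *ᵥ u) →
        ∑ J : Fin l → Fin m, (∏ t, p (J t)) *
            ((step J x - xstar) ⬝ᵥ (step J x - xstar)) ≤
          ρ ^ l * ((x - xstar) ⬝ᵥ (x - xstar)) := by
      rintro x ⟨u, hu⟩
      have hle : ∀ J : Fin l → Fin m,
          (step J x - xstar) ⬝ᵥ (step J x - xstar) ≤
            chain A l J (x - xstar) ⬝ᵥ chain A l J (x - xstar) := by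
        intro J
        rw [herr J x]
        exact step_le_chain A J (pJ J) (hpJ J) (x - xstar)
      calc ∑ J : Fin l → Fin m, (∏ t, p (J t)) *
              ((step J x - xstar) ⬝ᵥ (step J x - xstar))
          ≤ ∑ J : Fin l → Fin m, (∏ t, p (J t)) *
              (chain A l J (x - xstar) ⬝ᵥ chain A l J (x - xstar)) :=
            Finset.sum_le_sum fun J _ => mul_le_mul_of_nonneg_left (hle J)
              (Finset.prod_nonneg fun t _ => p_nonneg A p hp _)
        _ ≤ ρ ^ l * ((x - xstar) ⬝ᵥ (x - xstar)) := by
            rw [hu, hρ]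
            exact chain_exp A hF p hp l u
    -- the error stays in the range of Aᵀ
    have hstepr : ∀ (J : Fin l → Fin m) x, (∃ u, x - xstar = Aᵀ *ᵥ u) →
        ∃ u, step J x - xstar = Aᵀ *ᵥ u := by
      rintro J x ⟨u, hu⟩
      rw [herr J x, hu]
      exact step_range A J (pJ J) (hpJ J) u
    have hrange : ∀ k (ω : Fin k → (Fin l → Fin m)),
        ∃ u, traj step x0 k ω - xstar = Aᵀ *ᵥ u := by
      intro k
      induction k with
      | zero => intro ω; exact hx0
      | succ k ih => intro ω; exact hstepr _ _ (ih (Fin.init ω))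
    intro k
    induction k with
    | zero =>
        haveI : Unique (Fin 0 → (Fin l → Fin m)) :=
          ⟨⟨fun i => i.elim0⟩, fun f => funext fun i => i.elim0⟩
        have h1 : (∏ i : Fin 0, ∏ t, p ((default : Fin 0 → Fin l → Fin m) i t)) = 1 := by simp
        rw [Fintype.sum_unique, h1, one_mul, Nat.mul_zero, pow_zero, one_mul]
        exact le_refl _
    | succ k ih =>
        rw [sum_succ_fn]
        have hterm : ∀ (ω' : Fin k → (Fin l → Fin m)) (J : Fin l → Fin m),
            (∏ i, ∏ t, p ((Fin.snoc ω' J : Fin (k+1) → Fin l → Fin m) i t)) *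
              ((traj step x0 (k+1) (Fin.snoc ω' J) - xstar) ⬝ᵥ
                (traj step x0 (k+1) (Fin.snoc ω' J) - xstar)) =
            (∏ i, ∏ t, p (ω' i t)) * ((∏ t, p (J t)) *
              ((step J (traj step x0 k ω') - xstar) ⬝ᵥ
                (step J (traj step x0 k ω') - xstar))) := by
          intro ω' J
          have h1 : (∏ i, ∏ t, p ((Fin.snoc ω' J : Fin (k+1) → Fin l → Fin m) i t)) =
              (∏ i, ∏ t, p (ω' i t)) * (∏ t, p (J t)) := by
            rw [Fin.prod_univ_castSucc]
            simp [Fin.snoc_castSucc, Fin.snoc_last]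
          have h2 : traj step x0 (k+1) (Fin.snoc ω' J) = step J (traj step x0 k ω') := by
            have h2' : traj step x0 (k+1) (Fin.snoc ω' J) =
                step ((Fin.snoc ω' J : Fin (k+1) → Fin l → Fin m) (Fin.last k))
                  (traj step x0 k (Fin.init (Fin.snoc ω' J : Fin (k+1) → Fin l → Fin m))) := rfl
            rw [h2', Fin.snoc_last, Fin.init_snoc]
          rw [h1, h2]
          ring
        calc ∑ ω' : Fin k → (Fin l → Fin m), ∑ J : Fin l → Fin m,
                (∏ i, ∏ t, p ((Fin.snoc ω' J : Fin (k+1) → Fin l → Fin m) i t)) *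
                  ((traj step x0 (k+1) (Fin.snoc ω' J) - xstar) ⬝ᵥ
                    (traj step x0 (k+1) (Fin.snoc ω' J) - xstar))
            = ∑ ω' : Fin k → (Fin l → Fin m), (∏ i, ∏ t, p (ω' i t)) *
                ∑ J : Fin l → Fin m, (∏ t, p (J t)) *
                  ((step J (traj step x0 k ω') - xstar) ⬝ᵥ
                    (step J (traj step x0 k ω') - xstar)) := by
              apply Finset.sum_congr rfl
              intro ω' _
              rw [Finset.mul_sum]
              exact Finset.sum_congr rfl fun J _ => hterm ω' J
          _ ≤ ∑ ω' : Fin k → (Fin l → Fin m), (∏ i, ∏ t, p (ω' i t)) *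
                (ρ ^ l * ((traj step x0 k ω' - xstar) ⬝ᵥ (traj step x0 k ω' - xstar))) :=
              Finset.sum_le_sum fun ω' _ => mul_le_mul_of_nonneg_left
                (hstepexp _ (hrange k ω'))
                (Finset.prod_nonneg fun i _ =>
                  Finset.prod_nonneg fun t _ => p_nonneg A p hp _)
          _ = ρ ^ l * ∑ ω' : Fin k → (Fin l → Fin m), (∏ i, ∏ t, p (ω' i t)) *
                ((traj step x0 k ω' - xstar) ⬝ᵥ (traj step x0 k ω' - xstar)) := by
              rw [Finset.mul_sum]
              exact Finset.sum_congr rfl fun ω' _ => by ring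
          _ ≤ ρ ^ l * (ρ ^ (l * k) * ((x0 - xstar) ⬝ᵥ (x0 - xstar))) :=
              mul_le_mul_of_nonneg_left ih (pow_nonneg hρ0 l)
          _ = ρ ^ (l * (k+1)) * ((x0 - xstar) ⬝ᵥ (x0 - xstar)) := by
              rw [show l * (k+1) = l + l * k by ring, pow_add, mul_assoc]
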